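/- Let α ∈ (0,2). Let G be a probability distribution function on ℝ satisfying G(x) = c/((−x)^α) for all x ≤ −x₀ and 1 − G(x) = c/x^α for all x ≥ x₀, where c > 0 and x₀ > 0. Then the real part of the characteristic function ĝ(ξ) = ∫ e^{iξx} dG(x) satisfies lim_{ξ→0⁺} (1 − ĝ(ξ))/ξ^α = 2c · ∫₀^∞ (sin x)/x^α dx, provided ĝ is real (i.e., G is symmetric). -/

import Mathlib

open MeasureTheory Real Set Filter intervalIntegral
open scoped ENNReal NNReal

lemma pareto_one_sub_cos_nonneg (x : ℝ) : 0 ≤ 1 - Real.cos x := by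
  nlinarith [Real.cos_le_one x]

lemma pareto_one_sub_cos_le (x : ℝ) : 1 - Real.cos x ≤ x ^ 2 / 2 := by
  nlinarith [Real.one_sub_sq_div_two_le_cos (x := x)]

lemma pareto_one_sub_cos_le_two (x : ℝ) : 1 - Real.cos x ≤ 2 := by
  nlinarith [Real.neg_one_le_cos x]

lemma pareto_g_integrable {α : ℝ} (hα0 : 0 < α) (hα2 : α < 2) :
    IntegrableOn (fun u : ℝ => (1 - Real.cos u) * (α * u ^ (-α - 1))) (Ioi 0) := by
  have hmeas : Measurable fun u : ℝ => (1 - Real.cos u) * (α * u ^ (-α - 1)) :=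
    (measurable_const.sub Real.measurable_cos).mul
      (measurable_const.mul (measurable_id.pow_const _))
  have h01 : IntegrableOn (fun u : ℝ => (1 - Real.cos u) * (α * u ^ (-α - 1))) (Ioc 0 1) := by
    have hdom : IntegrableOn (fun u : ℝ => α / 2 * u ^ (1 - α)) (Ioc 0 1) := by
      have := (intervalIntegral.intervalIntegrable_rpow' (a := 0) (b := 1)
        (show (-1 : ℝ) < 1 - α by linarith))
      rw [intervalIntegrable_iff_integrableOn_Ioc_of_le zero_le_one] at this
      exact this.const_mul _
    refine Integrable.mono' hdom hmeas.aestronglyMeasurable ?_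
    filter_upwards [ae_restrict_mem measurableSet_Ioc] with u hu
    have hu0 : 0 < u := hu.1
    have hr : (0 : ℝ) ≤ u ^ (-α - 1) := Real.rpow_nonneg hu0.le _
    have h1 : (1 - Real.cos u) * (α * u ^ (-α - 1)) ≤ u ^ 2 / 2 * (α * u ^ (-α - 1)) :=
      mul_le_mul_of_nonneg_right (pareto_one_sub_cos_le u) (by positivity)
    have h2 : u ^ 2 / 2 * (α * u ^ (-α - 1)) = α / 2 * u ^ (1 - α) := by
      have : u ^ (1 - α) = u ^ (2 : ℝ) * u ^ (-α - 1) := by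
        rw [← Real.rpow_add hu0]; ring_nf
      rw [this, Real.rpow_two]; ring
    rw [Real.norm_eq_abs, abs_of_nonneg (mul_nonneg (pareto_one_sub_cos_nonneg u) (by positivity))]
    rw [← h2]; exact h1
  have h1i : IntegrableOn (fun u : ℝ => (1 - Real.cos u) * (α * u ^ (-α - 1))) (Ioi 1) := by
    have hdom : IntegrableOn (fun u : ℝ => 2 * α * u ^ (-α - 1)) (Ioi 1) :=
      (integrableOn_Ioi_rpow_of_lt (show -α - 1 < -1 by linarith) one_pos).const_mul _
    refine Integrable.mono' hdom hmeas.aestronglyMeasurable ?_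
    filter_upwards [ae_restrict_mem measurableSet_Ioi] with u hu
    have hu0 : (0 : ℝ) < u := lt_trans one_pos hu
    have hr : (0 : ℝ) ≤ u ^ (-α - 1) := Real.rpow_nonneg hu0.le _
    rw [Real.norm_eq_abs, abs_of_nonneg (mul_nonneg (pareto_one_sub_cos_nonneg u) (by positivity))]
    calc (1 - Real.cos u) * (α * u ^ (-α - 1)) ≤ 2 * (α * u ^ (-α - 1)) :=
          mul_le_mul_of_nonneg_right (pareto_one_sub_cos_le_two u) (by positivity)
      _ = 2 * α * u ^ (-α - 1) := by ring
  have : (Ioc (0:ℝ) 1) ∪ (Ioi 1) = Ioi 0 := Ioc_union_Ioi_eq_Ioi zero_le_one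
  rw [← this]
  exact h01.union h1i

lemma pareto_sin_intervalIntegrable {α : ℝ} (hα0 : 0 < α) (hα2 : α < 2) {T : ℝ} (hT : 0 ≤ T) :
    IntervalIntegrable (fun x : ℝ => Real.sin x * x ^ (-α)) volume 0 T := by
  have hdom : IntervalIntegrable (fun x : ℝ => x ^ (1 - α)) volume 0 T :=
    intervalIntegral.intervalIntegrable_rpow' (by linarith)
  refine hdom.mono_fun ?_ ?_
  · exact (Real.measurable_sin.mul (measurable_id.pow_const _)).aestronglyMeasurable
  · filter_upwards [ae_restrict_mem measurableSet_uIoc] with x hx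
    rw [uIoc_of_le hT] at hx
    have hx0 : 0 < x := hx.1
    rw [Real.norm_eq_abs, Real.norm_eq_abs, abs_mul,
      abs_of_nonneg (Real.rpow_nonneg hx0.le (-α)),
      abs_of_nonneg (Real.rpow_nonneg hx0.le (1 - α))]
    have h1 : |Real.sin x| ≤ x := by
      have := Real.abs_sin_le_abs (x := x)
      rwa [abs_of_pos hx0] at this
    calc |Real.sin x| * x ^ (-α) ≤ x * x ^ (-α) :=
          mul_le_mul_of_nonneg_right h1 (Real.rpow_nonneg hx0.le _)
      _ = x ^ (1 - α) := by
          rw [show (1 - α) = 1 + (-α) by ring, Real.rpow_add hx0, Real.rpow_one]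

lemma pareto_g_intervalIntegrable {α : ℝ} (hα0 : 0 < α) (hα2 : α < 2) {T : ℝ} (hT : 0 ≤ T) :
    IntervalIntegrable (fun u : ℝ => (1 - Real.cos u) * (α * u ^ (-α - 1))) volume 0 T := by
  rw [intervalIntegrable_iff_integrableOn_Ioc_of_le hT]
  exact (pareto_g_integrable hα0 hα2).mono_set Ioc_subset_Ioi_self

lemma pareto_key_identity {α : ℝ} (hα0 : 0 < α) (hα2 : α < 2) {T : ℝ} (hT : 0 ≤ T) :
    ∫ x in (0:ℝ)..T, Real.sin x / x ^ α
      = (1 - Real.cos T) * T ^ (-α) + ∫ x in (0:ℝ)..T, (1 - Real.cos x) * (α * x ^ (-α - 1)) := by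
  have hdivmul : ∫ x in (0:ℝ)..T, Real.sin x / x ^ α = ∫ x in (0:ℝ)..T, Real.sin x * x ^ (-α) := by
    refine intervalIntegral.integral_congr fun x hx => ?_
    rw [uIcc_of_le hT] at hx
    rw [Real.rpow_neg hx.1, div_eq_mul_inv]
  set F : ℝ → ℝ := fun x => (1 - Real.cos x) * x ^ (-α) with hF
  have hF0 : F 0 = 0 := by simp [hF]
  have hcont : ContinuousOn F (Icc 0 T) := by
    intro x hx
    rcases eq_or_lt_of_le hx.1 with h0 | h0
    · -- x = 0
      rw [← h0]
      unfold ContinuousWithinAt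
      rw [hF0]
      have hbound : ∀ᶠ y in nhdsWithin 0 (Icc 0 T), F y ≤ y ^ ((2:ℝ) - α) / 2 := by
        filter_upwards [eventually_mem_nhdsWithin] with y hy
        rcases eq_or_lt_of_le hy.1 with h1 | h1
        · rw [← h1]; simp [hF, Real.zero_rpow (by linarith : (2:ℝ) - α ≠ 0)]
        · have : y ^ ((2:ℝ) - α) = y ^ 2 * y ^ (-α) := by
            rw [show (2:ℝ) - α = 2 + (-α) by ring, Real.rpow_add h1, Real.rpow_two]
          rw [this, hF]
          have := mul_le_mul_of_nonneg_right (pareto_one_sub_cos_le y)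
            (Real.rpow_nonneg h1.le (-α))
          linarith
      have hnn : ∀ᶠ y in nhdsWithin 0 (Icc 0 T), 0 ≤ F y := by
        filter_upwards [eventually_mem_nhdsWithin] with y hy
        exact mul_nonneg (pareto_one_sub_cos_nonneg y) (Real.rpow_nonneg hy.1 _)
      have htend : Tendsto (fun y : ℝ => y ^ ((2:ℝ) - α) / 2) (nhdsWithin 0 (Icc 0 T)) (nhds 0) := by
        have hc : ContinuousAt (fun y : ℝ => y ^ ((2:ℝ) - α)) 0 :=
          Real.continuousAt_rpow_const 0 _ (Or.inr (by linarith))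
        have := (hc.continuousWithinAt (s := Icc 0 T)).tendsto
        rw [Real.zero_rpow (by linarith : (2:ℝ) - α ≠ 0)] at this
        simpa using this.div_const 2
      exact squeeze_zero' hnn hbound htend
    · exact (((continuous_const.sub Real.continuous_cos).continuousAt.mul
        (Real.continuousAt_rpow_const x _ (Or.inl h0.ne'))).continuousWithinAt)
  have hderiv : ∀ x ∈ Ioo (0:ℝ) T, HasDerivAt F
      (Real.sin x * x ^ (-α) - (1 - Real.cos x) * (α * x ^ (-α - 1))) x := by
    intro x hx
    have h1 : HasDerivAt (fun y : ℝ => 1 - Real.cos y) (Real.sin x) x := by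
      simpa using (Real.hasDerivAt_cos x).const_sub 1
    have h2 : HasDerivAt (fun y : ℝ => y ^ (-α)) (-α * x ^ (-α - 1)) x := by
      simpa using Real.hasDerivAt_rpow_const (x := x) (p := -α) (Or.inl hx.1.ne')
    have := h1.mul h2
    refine this.congr_deriv ?_
    ring
  have hint : IntervalIntegrable
      (fun x : ℝ => Real.sin x * x ^ (-α) - (1 - Real.cos x) * (α * x ^ (-α - 1))) volume 0 T :=
    (pareto_sin_intervalIntegrable hα0 hα2 hT).sub (pareto_g_intervalIntegrable hα0 hα2 hT)
  have hftc := intervalIntegral.integral_eq_sub_of_hasDerivAt_of_le hT hcont hderiv hint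
  rw [intervalIntegral.integral_sub (pareto_sin_intervalIntegrable hα0 hα2 hT)
    (pareto_g_intervalIntegrable hα0 hα2 hT), hF0, sub_zero] at hftc
  rw [hdivmul]
  have : F T = (1 - Real.cos T) * T ^ (-α) := rfl
  linarith [hftc]

lemma pareto_part1 {α : ℝ} (hα0 : 0 < α) (hα2 : α < 2) :
    Tendsto (fun T : ℝ => ∫ x in (0:ℝ)..T, Real.sin x / x ^ α) atTop
      (nhds (∫ u in Ioi (0:ℝ), (1 - Real.cos u) * (α * u ^ (-α - 1)))) := by
  have hgi := pareto_g_integrable hα0 hα2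
  have h1 : Tendsto (fun T : ℝ => (1 - Real.cos T) * T ^ (-α)) atTop (nhds 0) := by
    apply squeeze_zero' (g := fun T : ℝ => 2 * T ^ (-α))
    · filter_upwards [eventually_ge_atTop (0:ℝ)] with T hT
      exact mul_nonneg (pareto_one_sub_cos_nonneg T) (Real.rpow_nonneg hT _)
    · filter_upwards [eventually_ge_atTop (0:ℝ)] with T hT
      exact mul_le_mul_of_nonneg_right (pareto_one_sub_cos_le_two T) (Real.rpow_nonneg hT _)
    · simpa using (tendsto_rpow_neg_atTop hα0).const_mul 2
  have h2 : Tendsto (fun T : ℝ => ∫ x in (0:ℝ)..T, (1 - Real.cos x) * (α * x ^ (-α - 1)))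
      atTop (nhds (∫ u in Ioi (0:ℝ), (1 - Real.cos u) * (α * u ^ (-α - 1)))) :=
    intervalIntegral_tendsto_integral_Ioi 0 hgi tendsto_id
  have := h1.add h2
  rw [zero_add] at this
  refine this.congr' ?_
  filter_upwards [eventually_ge_atTop (0:ℝ)] with T hT
  exact (pareto_key_identity hα0 hα2 hT).symm

lemma pareto_toReal_Ioc (μ : Measure ℝ) [IsProbabilityMeasure μ] {a b : ℝ} (hab : a ≤ b) :
    (μ (Ioc a b)).toReal = (μ (Iic b)).toReal - (μ (Iic a)).toReal := by
  have h : μ (Iic b) = μ (Iic a) + μ (Ioc a b) := by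
    rw [← measure_union (Iic_disjoint_Ioc le_rfl) measurableSet_Ioc, Iic_union_Ioc_eq_Iic hab]
  rw [h, ENNReal.toReal_add (measure_ne_top μ _) (measure_ne_top μ _)]
  ring

lemma pareto_restrict_density {α c x₀ : ℝ} (hα0 : 0 < α) (hc : 0 < c) (hx₀ : 0 < x₀)
    (μ : Measure ℝ) [IsProbabilityMeasure μ]
    (hup : ∀ x : ℝ, x₀ ≤ x → 1 - (μ (Iic x)).toReal = c / x ^ α) :
    μ.restrict (Ioi x₀)
      = (volume.restrict (Ioi x₀)).withDensity
          (fun t => ENNReal.ofReal (c * α * t ^ (-α - 1))) := by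
  refine Measure.ext_of_Iic _ _ (fun x => ?_)
  rw [Measure.restrict_apply measurableSet_Iic, Set.inter_comm, Set.Ioi_inter_Iic,
    withDensity_apply _ measurableSet_Iic, Measure.restrict_restrict measurableSet_Iic,
    Set.inter_comm, Set.Ioi_inter_Iic]
  rcases le_or_gt x x₀ with hx | hx
  · rw [Set.Ioc_eq_empty (by exact not_lt.2 hx)]
    simp
  · have hx0 : (0:ℝ) < x := lt_trans hx₀ hx
    have hbase : IntegrableOn (fun t : ℝ => c * α * t ^ (-α - 1)) (Ioi x₀) :=
      (integrableOn_Ioi_rpow_of_lt (show -α - 1 < -1 by linarith) hx₀).const_mul (c * α)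
    have hint : IntegrableOn (fun t : ℝ => c * α * t ^ (-α - 1)) (Ioc x₀ x) :=
      hbase.mono_set Ioc_subset_Ioi_self
    have hnn : 0 ≤ᵐ[volume.restrict (Ioc x₀ x)] fun t : ℝ => c * α * t ^ (-α - 1) := by
      filter_upwards [ae_restrict_mem measurableSet_Ioc] with t ht
      have ht0 : (0:ℝ) < t := lt_trans hx₀ ht.1
      positivity
    rw [← ofReal_integral_eq_lintegral_ofReal hint hnn]
    have hL : μ (Ioc x₀ x) = ENNReal.ofReal ((μ (Ioc x₀ x)).toReal) :=
      (ENNReal.ofReal_toReal (measure_ne_top μ _)).symm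
    rw [hL]
    congr 1
    have e1 : (μ (Ioc x₀ x)).toReal = c / x₀ ^ α - c / x ^ α := by
      rw [pareto_toReal_Ioc μ hx.le]
      have h1 := hup x hx.le
      have h2 := hup x₀ le_rfl
      linarith
    have e2 : ∫ t in Ioc x₀ x, c * α * t ^ (-α - 1) = c / x₀ ^ α - c / x ^ α := by
      rw [← intervalIntegral.integral_of_le hx.le, intervalIntegral.integral_const_mul,
        integral_rpow (Or.inr ⟨by intro h; exact hα0.ne' (by linarith),
          by rw [Set.uIcc_of_le hx.le]; intro h; exact absurd h.1 (not_le.2 hx₀)⟩)]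
      have e3 : (-α - 1 + 1) = -α := by ring
      rw [e3, Real.rpow_neg hx0.le, Real.rpow_neg hx₀.le]
      have hxa : x ^ α ≠ 0 := (Real.rpow_pos_of_pos hx0 α).ne'
      have hxa0 : x₀ ^ α ≠ 0 := (Real.rpow_pos_of_pos hx₀ α).ne'
      field_simp
      ring
    rw [e1, e2]

lemma pareto_atom_neg {α c x₀ : ℝ} (hα0 : 0 < α) (hc : 0 < c) (hx₀ : 0 < x₀)
    (μ : Measure ℝ) [IsProbabilityMeasure μ]
    (hlow : ∀ x : ℝ, x ≤ -x₀ → (μ (Iic x)).toReal = c / (-x) ^ α) :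
    μ {-x₀} = 0 := by
  have key : ∀ ε : ℝ, 0 < ε → (μ {-x₀}).toReal ≤ c / x₀ ^ α - c / (x₀ + ε) ^ α := by
    intro ε hε
    have hsub : ({-x₀} : Set ℝ) ⊆ Ioc (-x₀ - ε) (-x₀) := by
      intro y hy
      rw [mem_singleton_iff] at hy
      subst hy
      exact ⟨by linarith, le_rfl⟩
    have hm := ENNReal.toReal_mono (measure_ne_top μ _) (measure_mono hsub)
    refine hm.trans (le_of_eq ?_)
    rw [pareto_toReal_Ioc μ (by linarith)]
    have h1 : (μ (Iic (-x₀))).toReal = c / x₀ ^ α := by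
      have := hlow (-x₀) le_rfl; rwa [neg_neg] at this
    have h2 : (μ (Iic (-x₀ - ε))).toReal = c / (x₀ + ε) ^ α := by
      have := hlow (-x₀ - ε) (by linarith)
      rwa [show -(-x₀ - ε) = x₀ + ε by ring] at this
    rw [h1, h2]
  have htend : Tendsto (fun ε : ℝ => c / x₀ ^ α - c / (x₀ + ε) ^ α)
      (nhdsWithin 0 (Ioi 0)) (nhds 0) := by
    have hc1 : ContinuousAt (fun ε : ℝ => c / x₀ ^ α - c / (x₀ + ε) ^ α) 0 := by
      have h1 : ContinuousAt (fun ε : ℝ => x₀ + ε) 0 := continuousAt_const.add continuousAt_id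
      have h2 : ContinuousAt (fun y : ℝ => y ^ α) (x₀ + 0) :=
        Real.continuousAt_rpow_const _ _ (Or.inl (by simpa using hx₀.ne'))
      have h3 : ContinuousAt (fun ε : ℝ => (x₀ + ε) ^ α) 0 := h2.comp h1
      exact continuousAt_const.sub (continuousAt_const.div h3
        (by simpa using (Real.rpow_pos_of_pos hx₀ α).ne'))
    have h4 := (hc1.continuousWithinAt (s := Ioi 0)).tendsto
    simpa using h4
  have h0 : (μ {-x₀}).toReal ≤ 0 := by
    refine ge_of_tendsto htend ?_
    filter_upwards [self_mem_nhdsWithin] with ε hε using key ε hε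
  have h1 : (μ {-x₀}).toReal = 0 := le_antisymm h0 ENNReal.toReal_nonneg
  exact ((ENNReal.toReal_eq_zero_iff _).1 h1).resolve_right (measure_ne_top μ _)

lemma pareto_left_tail {α c x₀ : ℝ} (hα0 : 0 < α) (hc : 0 < c) (hx₀ : 0 < x₀)
    (μ : Measure ℝ) [IsProbabilityMeasure μ]
    (hsymm : μ.map (fun x => -x) = μ)
    (hlow : ∀ x : ℝ, x ≤ -x₀ → (μ (Iic x)).toReal = c / (-x) ^ α)
    (ξ : ℝ) :
    ∫ x in Iic (-x₀), (1 - Real.cos (ξ * x)) ∂μ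
      = ∫ x in Ioi x₀, (1 - Real.cos (ξ * x)) ∂μ := by
  have hatomneg : μ {-x₀} = 0 := pareto_atom_neg hα0 hc hx₀ μ hlow
  have hatom : μ {x₀} = 0 := by
    have : μ {x₀} = μ ((fun x : ℝ => -x) ⁻¹' {x₀}) := by
      conv_lhs => rw [← hsymm]
      exact Measure.map_apply measurable_neg (measurableSet_singleton _)
    rw [this, show (fun x : ℝ => -x) ⁻¹' {x₀} = {-x₀} by ext y; simp [neg_eq_iff_eq_neg],
      hatomneg]
  have hmeas : Measurable fun x : ℝ => 1 - Real.cos (ξ * x) :=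
    measurable_const.sub (Real.measurable_cos.comp (measurable_const.mul measurable_id))
  conv_lhs => rw [← hsymm]
  rw [setIntegral_map measurableSet_Iic
    (hmeas.aestronglyMeasurable) measurable_neg.aemeasurable]
  have hpre : (fun x : ℝ => -x) ⁻¹' (Iic (-x₀)) = Ici x₀ := by
    ext y; simp
  rw [hpre]
  have heq : ∀ x : ℝ, 1 - Real.cos (ξ * -x) = 1 - Real.cos (ξ * x) := fun x => by
    rw [mul_neg, Real.cos_neg]
  simp_rw [heq]
  refine setIntegral_congr_set ?_
  rw [ae_eq_set]
  constructor
  · rw [show Ici x₀ \ Ioi x₀ = {x₀} by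
      ext y; simp only [mem_diff, mem_Ici, mem_Ioi, not_lt, mem_singleton_iff]
      exact ⟨fun h => le_antisymm h.2 h.1, fun h => ⟨h.ge, h.le⟩⟩]; exact hatom
  · rw [diff_eq_empty.2 Ioi_subset_Ici_self]; exact measure_empty

lemma pareto_right_tail {α c x₀ : ℝ} (hα0 : 0 < α) (hc : 0 < c) (hx₀ : 0 < x₀)
    (μ : Measure ℝ) [IsProbabilityMeasure μ]
    (hup : ∀ x : ℝ, x₀ ≤ x → 1 - (μ (Iic x)).toReal = c / x ^ α)
    {ξ : ℝ} (hξ : 0 < ξ) :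
    ∫ x in Ioi x₀, (1 - Real.cos (ξ * x)) ∂μ
      = c * ξ ^ α * ∫ u in Ioi (ξ * x₀), (1 - Real.cos u) * (α * u ^ (-α - 1)) := by
  rw [pareto_restrict_density hα0 hc hx₀ μ hup]
  have hdm : Measurable fun t : ℝ => (c * α * t ^ (-α - 1)).toNNReal :=
    ((measurable_const.mul (measurable_id.pow_const _))).real_toNNReal
  rw [show (fun t : ℝ => ENNReal.ofReal (c * α * t ^ (-α - 1)))
      = (fun t : ℝ => ((c * α * t ^ (-α - 1)).toNNReal : ℝ≥0∞)) from rfl]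
  rw [integral_withDensity_eq_integral_smul hdm]
  have hcongr : ∀ᵐ t ∂(volume.restrict (Ioi x₀)),
      (c * α * t ^ (-α - 1)).toNNReal • (1 - Real.cos (ξ * t))
        = c * ξ ^ (α + 1) * ((1 - Real.cos (ξ * t)) * (α * (ξ * t) ^ (-α - 1))) := by
    filter_upwards [ae_restrict_mem measurableSet_Ioi] with t ht
    have ht0 : (0:ℝ) < t := lt_trans hx₀ ht
    have h1 : ((c * α * t ^ (-α - 1)).toNNReal : ℝ) = c * α * t ^ (-α - 1) :=
      Real.coe_toNNReal _ (by positivity)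
    rw [NNReal.smul_def, h1, smul_eq_mul, Real.mul_rpow hξ.le ht0.le]
    have h2 : ξ ^ (α + 1) * ξ ^ (-α - 1) = 1 := by
      rw [← Real.rpow_add hξ]
      norm_num
    linear_combination c * (Real.cos (ξ * t) - 1) * α * t ^ (-α - 1) * h2
  rw [integral_congr_ae hcongr, MeasureTheory.integral_const_mul,
    integral_comp_mul_left_Ioi
      (fun u => (1 - Real.cos u) * (α * u ^ (-α - 1))) x₀ hξ,
    smul_eq_mul, Real.rpow_add hξ, Real.rpow_one]
  have hξ' : ξ ≠ 0 := ne_of_gt hξ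
  field_simp
  ring_nf
  congr 1; ext u; ring

lemma pareto_tail_tendsto {α : ℝ} (hα0 : 0 < α) (hα2 : α < 2) :
    Tendsto (fun ε : ℝ => ∫ u in Ioi ε, (1 - Real.cos u) * (α * u ^ (-α - 1)))
      (nhdsWithin 0 (Ioi 0))
      (nhds (∫ u in Ioi (0:ℝ), (1 - Real.cos u) * (α * u ^ (-α - 1)))) := by
  set g : ℝ → ℝ := fun u => (1 - Real.cos u) * (α * u ^ (-α - 1)) with hg
  have hgmeas : Measurable g :=
    (measurable_const.sub Real.measurable_cos).mul
      (measurable_const.mul (measurable_id.pow_const _))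
  have hgi := pareto_g_integrable hα0 hα2
  have hrepr : (fun ε : ℝ => ∫ u in Ioi ε, g u)
      =ᶠ[nhdsWithin 0 (Ioi 0)] fun ε : ℝ => ∫ u in Ioi (0:ℝ), (Ioi ε).indicator g u := by
    filter_upwards [self_mem_nhdsWithin] with ε hε
    rw [MeasureTheory.integral_indicator measurableSet_Ioi, Measure.restrict_restrict measurableSet_Ioi,
      Set.Ioi_inter_Ioi, max_eq_left (le_of_lt hε)]
  have key : Tendsto (fun ε : ℝ => ∫ u in Ioi (0:ℝ), (Ioi ε).indicator g u)
      (nhdsWithin 0 (Ioi 0)) (nhds (∫ u in Ioi (0:ℝ), g u)) := by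
    refine tendsto_integral_filter_of_dominated_convergence (fun u => ‖g u‖) ?_ ?_ hgi.norm ?_
    · exact Eventually.of_forall fun ε =>
        (hgmeas.indicator measurableSet_Ioi).aestronglyMeasurable
    · exact Eventually.of_forall fun ε =>
        (ae_of_all _ fun u => norm_indicator_le_norm_self _ _)
    · filter_upwards [ae_restrict_mem measurableSet_Ioi] with u hu
      have hev : (fun ε : ℝ => (Ioi ε).indicator g u) =ᶠ[nhdsWithin 0 (Ioi 0)]
          fun _ => g u := by
        filter_upwards [nhdsWithin_le_nhds (Iio_mem_nhds hu)] with ε hε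
        exact indicator_of_mem (show u ∈ Ioi ε from hε) g
      exact Tendsto.congr' hev.symm tendsto_const_nhds
  exact Tendsto.congr' hrepr.symm key

lemma pareto_cos_integrable (μ : Measure ℝ) [IsProbabilityMeasure μ] (ξ : ℝ) :
    Integrable (fun x : ℝ => 1 - Real.cos (ξ * x)) μ := by
  refine Integrable.mono' (integrable_const 2)
    ((measurable_const.sub (Real.measurable_cos.comp
      (measurable_const.mul measurable_id))).aestronglyMeasurable) ?_
  filter_upwards with x
  rw [Real.norm_eq_abs, abs_of_nonneg (pareto_one_sub_cos_nonneg _)]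
  exact pareto_one_sub_cos_le_two _

lemma pareto_middle_tendsto {α x₀ : ℝ} (hα0 : 0 < α) (hα2 : α < 2) (hx₀ : 0 < x₀)
    (μ : Measure ℝ) [IsProbabilityMeasure μ] :
    Tendsto (fun ξ : ℝ => (∫ x in Ioc (-x₀) x₀, (1 - Real.cos (ξ * x)) ∂μ) / ξ ^ α)
      (nhdsWithin 0 (Ioi 0)) (nhds 0) := by
  apply squeeze_zero' (g := fun ξ : ℝ => ξ ^ ((2:ℝ) - α) * (x₀ ^ 2 / 2))
  · filter_upwards [self_mem_nhdsWithin] with ξ hξ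
    exact div_nonneg (setIntegral_nonneg measurableSet_Ioc
        (fun x _ => pareto_one_sub_cos_nonneg _))
      (Real.rpow_nonneg (le_of_lt hξ) _)
  · filter_upwards [self_mem_nhdsWithin] with ξ hξ
    have hξ0 : (0:ℝ) < ξ := hξ
    have hle : ∫ x in Ioc (-x₀) x₀, (1 - Real.cos (ξ * x)) ∂μ ≤ ξ ^ 2 * x₀ ^ 2 / 2 := by
      have h1 : ∫ x in Ioc (-x₀) x₀, (1 - Real.cos (ξ * x)) ∂μ
          ≤ ∫ _ in Ioc (-x₀) x₀, (ξ ^ 2 * x₀ ^ 2 / 2) ∂μ := by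
        refine setIntegral_mono_on ((pareto_cos_integrable μ ξ).integrableOn)
          (integrableOn_const (measure_ne_top _ _)) measurableSet_Ioc ?_
        intro x hx
        have h2 := pareto_one_sub_cos_le (ξ * x)
        have h3 : x ^ 2 ≤ x₀ ^ 2 := by nlinarith [hx.1, hx.2]
        nlinarith [sq_nonneg ξ]
      refine h1.trans ?_
      rw [setIntegral_const, smul_eq_mul]
      have h4 : μ.real (Ioc (-x₀) x₀) ≤ 1 := by
        have := prob_le_one (μ := μ) (s := Ioc (-x₀) x₀)
        exact ENNReal.toReal_le_of_le_ofReal one_pos.le (by simpa using this)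
      nlinarith [sq_nonneg (ξ * x₀)]
    have heq : ξ ^ 2 * x₀ ^ 2 / 2 / ξ ^ α = ξ ^ ((2:ℝ) - α) * (x₀ ^ 2 / 2) := by
      rw [Real.rpow_sub hξ0, Real.rpow_two]
      ring
    rw [← heq]
    exact div_le_div_of_nonneg_right hle (Real.rpow_pos_of_pos hξ0 α).le
  · have hc1 : ContinuousAt (fun ξ : ℝ => ξ ^ ((2:ℝ) - α)) 0 :=
      Real.continuousAt_rpow_const 0 _ (Or.inr (by linarith))
    have := ((hc1.continuousWithinAt (s := Ioi 0)).tendsto).mul_const (x₀ ^ 2 / 2)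
    rw [Real.zero_rpow (by linarith : (2:ℝ) - α ≠ 0), zero_mul] at this
    exact this

theorem pareto_tails_domain_of_attraction (α : ℝ) (hα0 : 0 < α) (hα2 : α < 2)
    (c x₀ : ℝ) (hc : 0 < c) (hx₀ : 0 < x₀)
    (μ : Measure ℝ) [IsProbabilityMeasure μ]
    (hsymm : μ.map (fun x => -x) = μ)
    (hlow : ∀ x : ℝ, x ≤ -x₀ → (μ (Iic x)).toReal = c / (-x) ^ α)
    (hup : ∀ x : ℝ, x₀ ≤ x → 1 - (μ (Iic x)).toReal = c / x ^ α) :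
    ∃ I : ℝ,
      Tendsto (fun T : ℝ => ∫ x in (0:ℝ)..T, Real.sin x / x ^ α) atTop (nhds I) ∧
      Tendsto (fun ξ : ℝ => (1 - ∫ x, Real.cos (ξ * x) ∂μ) / ξ ^ α)
        (nhdsWithin 0 (Ioi 0)) (nhds (2 * c * I)) := by
  refine ⟨∫ u in Ioi (0:ℝ), (1 - Real.cos u) * (α * u ^ (-α - 1)),
    pareto_part1 hα0 hα2, ?_⟩
  have hident : ∀ ξ : ℝ, 0 < ξ →
      (1 - ∫ x, Real.cos (ξ * x) ∂μ) / ξ ^ α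
        = (∫ x in Ioc (-x₀) x₀, (1 - Real.cos (ξ * x)) ∂μ) / ξ ^ α
          + 2 * c * ∫ u in Ioi (ξ * x₀), (1 - Real.cos u) * (α * u ^ (-α - 1)) := by
    intro ξ hξ
    have hint := pareto_cos_integrable μ ξ
    have hcosint : Integrable (fun x => Real.cos (ξ * x)) μ := by
      refine Integrable.mono' (integrable_const 1)
        ((Real.measurable_cos.comp (measurable_const.mul measurable_id)).aestronglyMeasurable) ?_
      filter_upwards with x
      rw [Real.norm_eq_abs]
      exact Real.abs_cos_le_one _
    have h1 : 1 - ∫ x, Real.cos (ξ * x) ∂μ = ∫ x, (1 - Real.cos (ξ * x)) ∂μ := by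
      rw [integral_sub (integrable_const 1) hcosint, MeasureTheory.integral_const]
      simp
    have hsplit : ∫ x, (1 - Real.cos (ξ * x)) ∂μ
        = (∫ x in Iic (-x₀), (1 - Real.cos (ξ * x)) ∂μ)
          + (∫ x in Ioc (-x₀) x₀, (1 - Real.cos (ξ * x)) ∂μ)
          + (∫ x in Ioi x₀, (1 - Real.cos (ξ * x)) ∂μ) := by
      rw [← integral_add_compl (measurableSet_Iic (a := x₀)) hint, compl_Iic]
      congr 1
      rw [← setIntegral_union (Iic_disjoint_Ioc le_rfl) measurableSet_Ioc
        hint.integrableOn hint.integrableOn, Iic_union_Ioc_eq_Iic (by linarith : -x₀ ≤ x₀)]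
    have hlt := pareto_left_tail hα0 hc hx₀ μ hsymm hlow ξ
    have hrt := pareto_right_tail hα0 hc hx₀ μ hup hξ
    have hξα : (0:ℝ) < ξ ^ α := Real.rpow_pos_of_pos hξ α
    rw [h1, hsplit, hlt, hrt]
    generalize (∫ u in Ioi (ξ * x₀), (1 - Real.cos u) * (α * u ^ (-α - 1))) = J
    generalize (∫ x in Ioc (-x₀) x₀, (1 - Real.cos (ξ * x)) ∂μ) = M
    field_simp
    ring
  have hmid := pareto_middle_tendsto hα0 hα2 hx₀ μ
  have htail : Tendsto
      (fun ξ : ℝ => ∫ u in Ioi (ξ * x₀), (1 - Real.cos u) * (α * u ^ (-α - 1)))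
      (nhdsWithin 0 (Ioi 0))
      (nhds (∫ u in Ioi (0:ℝ), (1 - Real.cos u) * (α * u ^ (-α - 1)))) := by
    refine (pareto_tail_tendsto hα0 hα2).comp ?_
    apply tendsto_nhdsWithin_of_tendsto_nhds_of_eventually_within
    · have : Tendsto (fun ξ : ℝ => ξ * x₀) (nhds 0) (nhds (0 * x₀)) :=
        tendsto_id.mul_const x₀
      rw [zero_mul] at this
      exact this.mono_left nhdsWithin_le_nhds
    · filter_upwards [self_mem_nhdsWithin] with ξ hξ
      exact mul_pos hξ hx₀
  have hsum := hmid.add (htail.const_mul (2 * c))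
  rw [zero_add] at hsum
  refine Tendsto.congr' ?_ hsum
  filter_upwards [self_mem_nhdsWithin] with ξ hξ
  exact (hident ξ hξ).symm
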